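/- Let F ∈ S♯_d with d > 2, let f_0 satisfy 0 ≤ lexp(f_0) ≤ 1/d, and let G = T^♭S_k T^♭S_{k−1}⋯T^♭S_1 with shifts S_1,…,S_k. Then ℓ_j = deg S_j for j = 1,…,k; in particular, the well-definedness condition ℓ_j > 1/d is automatically satisfied, so G(f_0) is always well defined when d > 2. -/

import Mathlib

open Complex MeasureTheory Filter Topology Asymptotics Finset

noncomputable section

/-- An element of the extended Selberg class `S♯`: a Dirichlet series, absolutely
convergent for `Re s > 1`, with meromorphic continuation `F` whose only possible pole
is at `s = 1` (of order `≤ m`), entire of finite order after multiplying by `(s-1)^m`,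
satisfying a Riemann-type functional equation. -/
structure ExtSelberg where
  a : ℕ → ℂ
  ha0 : a 0 = 0
  F : ℂ → ℂ
  m : ℕ
  Q : ℝ
  hQ : 0 < Q
  r : ℕ
  lam : Fin r → ℝ
  hlam : ∀ j, 0 < lam j
  mu : Fin r → ℂ
  hmu : ∀ j, 0 ≤ (mu j).re
  w : ℂ
  hw : ‖w‖ = 1
  hsum : ∀ σ : ℝ, 1 < σ → Summable fun n : ℕ => ‖a n‖ * (n : ℝ) ^ (-σ)
  hF : ∀ s : ℂ, 1 < s.re → F s = ∑' n : ℕ, a n * (n : ℂ) ^ (-s)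
  hcont : ∃ G : ℂ → ℂ, Differentiable ℂ G ∧
    (∃ C A : ℝ, ∀ s, ‖G s‖ ≤ C * Real.exp (‖s‖ ^ A)) ∧
    ∀ s, s ≠ 1 → G s = (s - 1) ^ m * F s
  hfe : ∀ s : ℂ,
    (∀ j, ∀ n : ℕ, (lam j : ℂ) * s + mu j ≠ -(n : ℂ)) →
    (∀ j, ∀ n : ℕ, (lam j : ℂ) * (1 - s) + (starRingEnd ℂ) (mu j) ≠ -(n : ℂ)) →
    s ≠ 1 → s ≠ 0 →
    (Q : ℂ) ^ s * (∏ j, Complex.Gamma ((lam j : ℂ) * s + mu j)) * F s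
      = w * (Q : ℂ) ^ (1 - s) *
        (∏ j, Complex.Gamma ((lam j : ℂ) * (1 - s) + (starRingEnd ℂ) (mu j))) *
        (starRingEnd ℂ) (F ((starRingEnd ℂ) (1 - s)))

/-- The degree `d = 2∑λⱼ`. -/
def ExtSelberg.degree (E : ExtSelberg) : ℝ := 2 * ∑ j, E.lam j

/-- The conductor `q_F = (2π)^d Q² ∏ λⱼ^{2λⱼ}`. -/
def ExtSelberg.conductor (E : ExtSelberg) : ℝ :=
  (2 * Real.pi) ^ E.degree * E.Q ^ 2 * ∏ j, E.lam j ^ (2 * E.lam j)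

/-- The internal shift `θ_F = (2/d) Im(∑ μⱼ)`. -/
def ExtSelberg.theta (E : ExtSelberg) : ℝ := (2 / E.degree) * (∑ j, E.mu j).im

/-- The exact order `m_F` of the pole of `F` at `s = 1` (`0` if `F` is entire). -/
def ExtSelberg.polarOrder (E : ExtSelberg) : ℕ :=
  sInf {k : ℕ | ∃ G : ℂ → ℂ, Differentiable ℂ G ∧ ∀ s, s ≠ 1 → G s = (s - 1) ^ k * E.F s}

/-- A (generalized) twist function `f(ξ) = ∑ ακ ξ^κ`, encoded as the finitely
supported family of its coefficients, indexed by the (real) exponents. -/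
abbrev TwistFun := ℝ →₀ ℝ

/-- All exponents are nonnegative. -/
def ValidT (f : TwistFun) : Prop := ∀ κ ∈ f.support, 0 ≤ κ

/-- The leading exponent `lexp(f) = κ₀` (junk value `0` for `f = 0`). -/
def lexpT (f : TwistFun) : ℝ :=
  if h : f.support.Nonempty then f.support.max' h else 0

/-- Evaluation `f(ξ) = ∑ ακ ξ^κ`. -/
def evalT (f : TwistFun) (ξ : ℝ) : ℝ := ∑ κ ∈ f.support, f κ * ξ ^ κ

/-- `e(x) = e^{2πix}`. -/
def e (x : ℝ) : ℂ := Complex.exp (2 * Real.pi * Complex.I * x)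

/-- The terms of the nonlinear twist `F(s;f) = ∑ a(n) n^{-s} e(-f(n))`. -/
def twistTerm (a : ℕ → ℂ) (f : TwistFun) (s : ℂ) (n : ℕ) : ℂ :=
  a n * (n : ℂ) ^ (-s) * e (-(evalT f n))

/-- The nonlinear twist `F(s;f) = ∑ a(n) n^{-s} e(-f(n))` (as a series). -/
def twistSeries (a : ℕ → ℂ) (f : TwistFun) (s : ℂ) : ℂ := ∑' n, twistTerm a f s n

/-- `Φ(z,ξ,𝛂) = z^{1/d} - 2π f(qz/ξ,𝛂)`. -/
def PhiT (d q : ℝ) (f : TwistFun) (z ξ : ℝ) : ℝ :=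
  z ^ (1 / d) - 2 * Real.pi * evalT f (q * z / ξ)

/-- `g = T^♭(f)` for `f` with positive leading coefficient: `g` is the (unique) twist
function with nonnegative exponents describing the asymptotic expansion, up to terms
tending to `0`, of `Φ(x₀(ξ),ξ,𝛂)/(2π)` where `x₀(ξ)` is the critical point of
`z ↦ Φ(z,ξ,𝛂)`. -/
def IsDualPos (d q : ℝ) (f g : TwistFun) : Prop :=
  ValidT g ∧
  ∃ x0 : ℝ → ℝ,
    (∀ᶠ ξ in atTop, 1 ≤ x0 ξ ∧ HasDerivAt (fun z => PhiT d q f z ξ) 0 (x0 ξ)) ∧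
    Tendsto (fun ξ => PhiT d q f (x0 ξ) ξ / (2 * Real.pi) - evalT g ξ) atTop (nhds 0)

/-- `g = T^♭(f)`, the truncated dual twist function: for a negative leading
coefficient it is defined by `f* = -(-f)*`. -/
def IsDual (d q : ℝ) (f g : TwistFun) : Prop :=
  (0 < f (lexpT f) ∧ IsDualPos d q f g) ∨ (f (lexpT f) < 0 ∧ IsDualPos d q (-f) (-g))

/-- A shift: `P ∈ ℤ[ξ]` with `deg P ≥ 1`, acting by `S(f) = f + P`. -/
def IsShiftPoly (P : TwistFun) : Prop :=
  P ≠ 0 ∧ (∀ κ ∈ P.support, ∃ n : ℕ, 1 ≤ n ∧ κ = (n : ℝ)) ∧ ∀ κ, ∃ z : ℤ, P κ = (z : ℝ)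

/-- `TwistRep d q f0 f L` holds when `f = G(f0)` for some well-defined operator
`G = T^♭Sₖ⋯T^♭S₁` (possibly composed with further trivial shifts), starting from a
base twist function `f0` with `0 ≤ lexp(f0) ≤ 1/d`, the list `L = [ℓ₁,…,ℓₖ]` recording
the leading exponents `ℓⱼ = lexp(SⱼT^♭⋯T^♭S₁(f0)) > 1/d` at each application of `T^♭`. -/
inductive TwistRep (d q : ℝ) : TwistFun → TwistFun → List ℝ → Prop
  | base (f0 : TwistFun) : ValidT f0 → lexpT f0 ≤ 1 / d → TwistRep d q f0 f0 []
  | shift (f0 f P : TwistFun) (L : List ℝ) : TwistRep d q f0 f L → IsShiftPoly P →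
      TwistRep d q f0 (f + P) L
  | dual (f0 f P g : TwistFun) (L : List ℝ) : TwistRep d q f0 f L → IsShiftPoly P →
      1 / d < lexpT (f + P) → IsDual d q (f + P) g → TwistRep d q f0 g (L ++ [lexpT (f + P)])

/-- `q = q_F (2πd)^{-d}`, the parameter entering `Φ`. -/
def qop (E : ExtSelberg) : ℝ := E.conductor * (2 * Real.pi * E.degree) ^ (-E.degree)

/-- The class `𝒜(F)` of twist functions obtained from some base `f0` by a chain of
shifts and truncated duality operators. -/
def InA (E : ExtSelberg) (f : TwistFun) : Prop :=
  ∃ f0 L, TwistRep E.degree (qop E) f0 f L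

/-- `F(s;f)` extends to an entire function. -/
def EntireTwist (E : ExtSelberg) (f : TwistFun) : Prop :=
  ∃ T : ℂ → ℂ, Differentiable ℂ T ∧ ∀ s, 1 < s.re → T s = twistSeries E.a f s

/-- `Spec*(F)`: the set of `α ∈ ℝ` for which the standard twist
`F(s,α) = ∑ a(n) n^{-s} e(-α n^{1/d})` is not entire. -/
def SpecStar (E : ExtSelberg) : Set ℝ :=
  {α | ¬ EntireTwist E (Finsupp.single (1 / E.degree) α)}

/-- `Spec(F)`: the positive part of `Spec*(F)`. -/
def Spec (E : ExtSelberg) : Set ℝ := {α | 0 < α ∧ α ∈ SpecStar E}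

/-- The subclass `𝒜₀(F) ⊆ 𝒜(F)`: chains starting from a base `f0(ξ) = α ξ^{1/d}` with
`α ∈ Spec*(F)`. -/
def InA0 (E : ExtSelberg) (f : TwistFun) : Prop :=
  ∃ α ∈ SpecStar E, ∃ L, TwistRep E.degree (qop E) (Finsupp.single (1 / E.degree) α) f L

/-- The subclass `𝒜₀₀(F) ⊆ 𝒜₀(F)`: chains starting from `f0 = 0` (that is, `α = 0`). -/
def InA00 (E : ExtSelberg) (f : TwistFun) : Prop :=
  (0 : ℝ) ∈ SpecStar E ∧
    ∃ L, TwistRep E.degree (qop E) (Finsupp.single (1 / E.degree) (0 : ℝ)) f L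

/-- `D(f) = ∏ⱼ (dℓⱼ - 1)` attached to a representation with exponent list `L`. -/
def Dprod (d : ℝ) (L : List ℝ) : ℝ := (L.map fun ℓ => d * ℓ - 1).prod

/-- The weight `ω(f)`: the minimal number of duality operators among all
representations of `f` in `𝒜(F)`. -/
def weightT (E : ExtSelberg) (f : TwistFun) : ℕ :=
  sInf {n | ∃ f0 L, TwistRep E.degree (qop E) f0 f L ∧ L.length = n}


/-! ### Auxiliary lemmas for Fact 1 -/

lemma le_lexpT {f : TwistFun} {κ : ℝ} (h : κ ∈ f.support) : κ ≤ lexpT f := by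
  rw [lexpT, dif_pos ⟨κ, h⟩]
  exact Finset.le_max' _ _ h

lemma lexpT_mem {f : TwistFun} (h : f ≠ 0) : lexpT f ∈ f.support := by
  have hne : f.support.Nonempty := Finsupp.support_nonempty_iff.mpr h
  rw [lexpT, dif_pos hne]; exact f.support.max'_mem hne

lemma lexpT_neg (f : TwistFun) : lexpT (-f) = lexpT f := by
  simp [lexpT, Finsupp.support_neg]

lemma tendsto_term_aux (κ m : ℝ) (c : ℝ) (h : κ < m) :
    Tendsto (fun ξ : ℝ => c * ξ ^ κ / ξ ^ m) atTop (𝓝 0) := by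
  have he : (fun ξ : ℝ => c * ξ ^ κ / ξ ^ m) =ᶠ[atTop] fun ξ => c * ξ ^ (-(m - κ)) := by
    filter_upwards [eventually_gt_atTop (0:ℝ)] with ξ hξ
    rw [neg_sub, Real.rpow_sub hξ]; ring
  rw [tendsto_congr' he]
  simpa using (tendsto_rpow_neg_atTop (by linarith : (0:ℝ) < m - κ)).const_mul c

lemma tendsto_sum_div_aux (s : Finset ℝ) (c : ℝ → ℝ) (m : ℝ) (hm : ∀ κ ∈ s, κ ≤ m)
    (hmem : m ∈ s) :
    Tendsto (fun ξ : ℝ => (∑ κ ∈ s, c κ * ξ ^ κ) / ξ ^ m) atTop (𝓝 (c m)) := by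
  have hterm : ∀ κ ∈ s, Tendsto (fun ξ : ℝ => c κ * ξ ^ κ / ξ ^ m) atTop
      (𝓝 (if κ = m then c κ else 0)) := by
    intro κ hκ
    by_cases h : κ = m
    · subst h
      rw [if_pos rfl]
      apply Tendsto.congr' (f₁ := fun _ => c κ)
      · filter_upwards [eventually_gt_atTop (0:ℝ)] with ξ hξ
        rw [mul_div_assoc, div_self (Real.rpow_pos_of_pos hξ κ).ne', mul_one]
      · exact tendsto_const_nhds
    · rw [if_neg h]
      exact tendsto_term_aux κ m (c κ) (lt_of_le_of_ne (hm κ hκ) h)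
  have h2 := tendsto_finset_sum s hterm
  rw [Finset.sum_ite_eq' s m (fun κ => c κ), if_pos hmem] at h2
  apply h2.congr'
  filter_upwards with ξ
  rw [Finset.sum_div]

lemma phi_deriv_aux (d q ξ : ℝ) (f : TwistFun) (x : ℝ) (hx : 0 < x) (hξ : 0 < ξ)
    (hq : 0 < q) :
    HasDerivAt (fun z => PhiT d q f z ξ)
      (1/d * x ^ (1/d - 1)
        - 2 * Real.pi * ∑ κ ∈ f.support, f κ * (κ * (q*x/ξ) ^ (κ - 1) * (q / ξ))) x := by
  have hu : q * x / ξ ≠ 0 := by positivity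
  have h1 : HasDerivAt (fun z : ℝ => z ^ (1/d)) (1/d * x ^ (1/d - 1)) x :=
    Real.hasDerivAt_rpow_const (Or.inl hx.ne')
  have h2 : HasDerivAt (fun z => evalT f (q * z / ξ))
      (∑ κ ∈ f.support, f κ * (κ * (q*x/ξ) ^ (κ-1) * (q/ξ))) x := by
    unfold evalT
    apply HasDerivAt.fun_sum
    intro κ _
    have hin : HasDerivAt (fun z : ℝ => q * z / ξ) (q / ξ) x := by
      simpa using ((hasDerivAt_id x).const_mul q).div_const ξ
    have hout : HasDerivAt (fun y : ℝ => y ^ κ) (κ * (q*x/ξ) ^ (κ-1)) (q*x/ξ) :=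
      Real.hasDerivAt_rpow_const (Or.inl hu)
    exact (hout.comp x hin).const_mul (f κ)
  exact h1.sub (h2.const_mul (2 * Real.pi))

lemma crit_identity_aux (d q ξ x : ℝ) (f : TwistFun) (hd : 0 < d) (hx : 0 < x) (hξ : 0 < ξ)
    (hq : 0 < q) (hcrit : HasDerivAt (fun z => PhiT d q f z ξ) 0 x) :
    x ^ (1/d) = 2 * Real.pi * d * ∑ κ ∈ f.support, κ * f κ * (q*x/ξ) ^ κ ∧
    PhiT d q f x ξ = 2 * Real.pi * ∑ κ ∈ f.support, (d * κ - 1) * f κ * (q*x/ξ) ^ κ := by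
  have hu : 0 < q * x / ξ := by positivity
  have h0 := (phi_deriv_aux d q ξ f x hx hξ hq).unique hcrit
  have hterm : ∀ κ ∈ f.support,
      f κ * (κ * (q*x/ξ) ^ (κ - 1) * (q / ξ)) * x = κ * f κ * (q*x/ξ) ^ κ := by
    intro κ _
    have hh : (q*x/ξ) ^ (κ - 1) * (q*x/ξ) = (q*x/ξ) ^ κ := by
      rw [← Real.rpow_add_one hu.ne' (κ-1), sub_add_cancel]
    calc f κ * (κ * (q*x/ξ) ^ (κ - 1) * (q / ξ)) * x
        = κ * f κ * ((q*x/ξ) ^ (κ - 1) * (q*x/ξ)) := by ring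
      _ = κ * f κ * (q*x/ξ) ^ κ := by rw [hh]
  have hsum : (∑ κ ∈ f.support, f κ * (κ * (q*x/ξ) ^ (κ - 1) * (q / ξ))) * x
      = ∑ κ ∈ f.support, κ * f κ * (q*x/ξ) ^ κ := by
    rw [Finset.sum_mul]; exact Finset.sum_congr rfl hterm
  have hx1 : x ^ (1/d - 1) * x = x ^ (1/d) := by
    rw [← Real.rpow_add_one hx.ne' (1/d-1), sub_add_cancel]
  have key : x ^ (1/d) = 2 * Real.pi * d * ∑ κ ∈ f.support, κ * f κ * (q*x/ξ) ^ κ := by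
    have h0' : 1/d * x ^ (1/d - 1)
        = 2 * Real.pi * ∑ κ ∈ f.support, f κ * (κ * (q*x/ξ) ^ (κ - 1) * (q / ξ)) := by
      linarith [h0]
    calc x ^ (1/d) = x ^ (1/d-1) * x := hx1.symm
      _ = d * x * (1/d * x ^ (1/d - 1)) := by field_simp
      _ = d * x * (2 * Real.pi * ∑ κ ∈ f.support, f κ * (κ * (q*x/ξ) ^ (κ - 1) * (q / ξ))) := by
          rw [h0']
      _ = 2 * Real.pi * d * ((∑ κ ∈ f.support, f κ * (κ * (q*x/ξ) ^ (κ - 1) * (q / ξ))) * x) := by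
          ring
      _ = _ := by rw [hsum]
  refine ⟨key, ?_⟩
  unfold PhiT evalT
  rw [key]
  rw [Finset.mul_sum, Finset.mul_sum, Finset.mul_sum, ← Finset.sum_sub_distrib]
  apply Finset.sum_congr rfl
  intro κ _
  ring

set_option maxHeartbeats 1000000 in
lemma dual_small {d q : ℝ} (hd : 2 < d) (hq : 0 < q) {f g : TwistFun}
    (hv : ValidT f) (hl : 1 ≤ lexpT f) (hpos : 0 < f (lexpT f))
    (hdual : IsDualPos d q f g) : ∀ κ ∈ g.support, κ < 1 := by
  obtain ⟨hvg, x0, hev, hlim⟩ := hdual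
  by_contra hcon
  push_neg at hcon
  obtain ⟨κ₁, hκ₁mem, hκ₁⟩ := hcon
  have hd0 : (0:ℝ) < d := by linarith
  have hπ : (0:ℝ) < Real.pi := Real.pi_pos
  set κ0 := lexpT f with hκ0
  have hκ00 : (1:ℝ) ≤ κ0 := hl
  have hκ0mem : κ0 ∈ f.support := Finsupp.mem_support_iff.mpr hpos.ne'
  set α := κ0 * f κ0 with hα
  have hα0 : 0 < α := mul_pos (by linarith) hpos
  have hgne : g ≠ 0 := fun h => by simp [h] at hκ₁mem
  set m := lexpT g with hm
  have hm1 : 1 ≤ m := le_trans hκ₁ (le_lexpT hκ₁mem)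
  have hβ : g m ≠ 0 := Finsupp.mem_support_iff.mp (lexpT_mem hgne)
  set e' := 1 / (d - 1) with he'
  have hd1 : (0:ℝ) < d - 1 := by linarith
  have he'pos : 0 < e' := div_pos one_pos hd1
  have he'1 : e' < 1 := by rw [he', div_lt_one hd1]; linarith
  have hpow : (0:ℝ) < κ0 * d - 1 := by nlinarith
  have hexple : 1/(κ0 * d - 1) * κ0 ≤ e' := by
    rw [he', one_div_mul_eq_div, div_le_div_iff₀ hpow hd1]
    nlinarith
  set S := fun u : ℝ => ∑ κ ∈ f.support, κ * f κ * u ^ κ with hSdef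
  set C := ∑ κ ∈ f.support, |(d * κ - 1) * f κ| with hCdef
  have hC0 : 0 ≤ C := Finset.sum_nonneg fun _ _ => abs_nonneg _
  have hT : ∀ u : ℝ, 0 < u →
      |∑ κ ∈ f.support, (d*κ-1) * f κ * u ^ κ| ≤ C * max 1 u ^ κ0 := by
    intro u hu
    refine le_trans (Finset.abs_sum_le_sum_abs _ _) ?_
    rw [hCdef, Finset.sum_mul]
    apply Finset.sum_le_sum
    intro κ hκ
    rw [abs_mul, _root_.abs_of_nonneg (Real.rpow_nonneg hu.le κ)]
    refine mul_le_mul_of_nonneg_left ?_ (abs_nonneg _)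
    calc u ^ κ ≤ (max 1 u) ^ κ := Real.rpow_le_rpow hu.le (le_max_right _ _) (hv κ hκ)
      _ ≤ (max 1 u) ^ κ0 := Real.rpow_le_rpow_of_exponent_le (le_max_left _ _) (le_lexpT hκ)
  have hStend : Tendsto (fun u : ℝ => S u / u ^ κ0) atTop (𝓝 α) := by
    simpa using tendsto_sum_div_aux f.support (fun κ => κ * f κ) κ0
      (fun κ h => le_lexpT h) hκ0mem
  have hSlow : ∀ᶠ u : ℝ in atTop, α/2 * u ^ κ0 ≤ S u := by
    filter_upwards [hStend.eventually_const_lt (by linarith : α/2 < α),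
      eventually_gt_atTop (0:ℝ)] with u h1 h2
    exact ((lt_div_iff₀ (Real.rpow_pos_of_pos h2 κ0)).mp h1).le
  obtain ⟨U0, hU0⟩ := eventually_atTop.mp hSlow
  set U := max U0 1 with hUdef
  have hU1 : (1:ℝ) ≤ U := le_max_right _ _
  have hU : ∀ u ≥ U, α/2 * u ^ κ0 ≤ S u := fun u hu => hU0 u ((le_max_left _ _).trans hu)
  set c := q * (Real.pi * d * α) ^ d with hcdef
  have hc : 0 < c := by
    rw [hcdef]; exact mul_pos hq (Real.rpow_pos_of_pos (by positivity) d)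
  have htend1 : ∀ᶠ ξ : ℝ in atTop,
      |PhiT d q f (x0 ξ) ξ / (2 * Real.pi) - evalT g ξ| < 1 := by
    have := NormedAddCommGroup.tendsto_nhds_zero.mp hlim 1 one_pos
    simpa [Real.norm_eq_abs] using this
  have hfinal : ∀ᶠ ξ : ℝ in atTop,
      |evalT g ξ| ≤ (1 + C * U ^ κ0) + (C * (1/c) ^ e') * ξ ^ e' := by
    filter_upwards [hev, eventually_ge_atTop (max 1 c), htend1] with ξ hx0 hξc hdiff
    obtain ⟨hx1, hcrit⟩ := hx0
    have hξ1 : (1:ℝ) ≤ ξ := (le_max_left _ _).trans hξc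
    have hξ0 : (0:ℝ) < ξ := by linarith
    set x := x0 ξ with hxdef
    have hx : (0:ℝ) < x := by linarith
    obtain ⟨id1, id2⟩ := crit_identity_aux d q ξ x f hd0 hx hξ0 hq hcrit
    set u := q * x / ξ with hu_def
    have hu : 0 < u := by rw [hu_def]; positivity
    have hPhi : |PhiT d q f x ξ| ≤ 2 * Real.pi * (C * max 1 u ^ κ0) := by
      rw [id2, abs_mul, _root_.abs_of_pos (by positivity : (0:ℝ) < 2*Real.pi)]
      exact mul_le_mul_of_nonneg_left (hT u hu) (by positivity)
    have hmax : max 1 u ^ κ0 ≤ U ^ κ0 + (1/c) ^ e' * ξ ^ e' := by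
      rcases le_total u U with h | h
      · have h1 : max 1 u ^ κ0 ≤ U ^ κ0 :=
          Real.rpow_le_rpow (by positivity) (max_le hU1 h) (by linarith)
        have h2 : (0:ℝ) ≤ (1/c) ^ e' * ξ ^ e' := by positivity
        linarith
      · have hmaxu : max 1 u = u := max_eq_right (hU1.trans h)
        have hSu : α/2 * u ^ κ0 ≤ S u := hU u h
        have hxx : x = (2 * Real.pi * d * S u) ^ d := by
          have h3 : x = x ^ ((1/d) * d) := by
            rw [one_div_mul_cancel hd0.ne', Real.rpow_one]
          rw [h3, Real.rpow_mul hx.le, id1]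
        have hxge : ((Real.pi * d * α) * u ^ κ0) ^ d ≤ x := by
          rw [hxx]
          apply Real.rpow_le_rpow (by positivity) ?_ hd0.le
          calc (Real.pi * d * α) * u ^ κ0 = 2 * Real.pi * d * (α/2 * u ^ κ0) := by ring
            _ ≤ 2 * Real.pi * d * S u := mul_le_mul_of_nonneg_left hSu (by positivity)
        have hexp : ((Real.pi * d * α) * u ^ κ0) ^ d
            = (Real.pi * d * α) ^ d * u ^ (κ0 * d) := by
          rw [Real.mul_rpow (by positivity) (by positivity), ← Real.rpow_mul hu.le]
        have hξeq : ξ = q * x / u := by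
          rw [hu_def]; field_simp
        have hcineq : c * u ^ (κ0 * d - 1) ≤ ξ := by
          have hstep : q * (((Real.pi * d * α) * u ^ κ0) ^ d) / u ≤ q * x / u := by
            gcongr
          calc c * u ^ (κ0 * d - 1)
              = q * ((Real.pi * d * α) ^ d * u ^ (κ0 * d)) / u := by
                rw [Real.rpow_sub hu, Real.rpow_one, hcdef]; ring
            _ = q * (((Real.pi * d * α) * u ^ κ0) ^ d) / u := by rw [hexp]
            _ ≤ q * x / u := hstep
            _ = ξ := hξeq.symm
        have hup : u ≤ (ξ/c) ^ (1/(κ0 * d - 1)) := by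
          have h1 : u ^ (κ0 * d - 1) ≤ ξ/c := by
            rw [le_div_iff₀ hc]; linarith [hcineq]
          calc u = (u ^ (κ0 * d - 1)) ^ (1/(κ0 * d - 1)) := by
                rw [← Real.rpow_mul hu.le, mul_one_div, div_self hpow.ne', Real.rpow_one]
            _ ≤ (ξ/c) ^ (1/(κ0 * d - 1)) :=
                Real.rpow_le_rpow (by positivity) h1 (by positivity)
        have hξc1 : (1:ℝ) ≤ ξ/c := (one_le_div hc).mpr ((le_max_right 1 c).trans hξc)
        have huk : u ^ κ0 ≤ (ξ/c) ^ e' := by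
          calc u ^ κ0 ≤ ((ξ/c) ^ (1/(κ0 * d - 1))) ^ κ0 :=
                Real.rpow_le_rpow hu.le hup (by linarith)
            _ = (ξ/c) ^ (1/(κ0 * d - 1) * κ0) := by
                rw [← Real.rpow_mul (by positivity)]
            _ ≤ (ξ/c) ^ e' := Real.rpow_le_rpow_of_exponent_le hξc1 hexple
        have hsplit : (ξ/c) ^ e' = (1/c) ^ e' * ξ ^ e' := by
          rw [div_eq_mul_one_div ξ c, Real.mul_rpow hξ0.le (by positivity), mul_comm]
        rw [hmaxu]
        have hU0' : (0:ℝ) ≤ U ^ κ0 := by positivity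
        calc u ^ κ0 ≤ (ξ/c) ^ e' := huk
          _ = (1/c) ^ e' * ξ ^ e' := hsplit
          _ ≤ U ^ κ0 + (1/c) ^ e' * ξ ^ e' := by linarith
    have h2π : (0:ℝ) < 2 * Real.pi := by positivity
    have hPhi2 : |PhiT d q f x ξ / (2 * Real.pi)| ≤ C * U ^ κ0 + C * (1/c) ^ e' * ξ ^ e' := by
      rw [abs_div, _root_.abs_of_pos h2π, div_le_iff₀ h2π]
      calc |PhiT d q f x ξ| ≤ 2 * Real.pi * (C * max 1 u ^ κ0) := hPhi
        _ ≤ 2 * Real.pi * (C * (U ^ κ0 + (1/c) ^ e' * ξ ^ e')) := by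
            exact mul_le_mul_of_nonneg_left (mul_le_mul_of_nonneg_left hmax hC0) h2π.le
        _ = (C * U ^ κ0 + C * (1/c) ^ e' * ξ ^ e') * (2 * Real.pi) := by ring
    have h6 := abs_sub_abs_le_abs_sub (evalT g ξ) (PhiT d q f x ξ / (2 * Real.pi))
    have h7 := abs_sub_comm (evalT g ξ) (PhiT d q f x ξ / (2 * Real.pi))
    have h8 : |PhiT d q f x ξ / (2 * Real.pi) - evalT g ξ| < 1 := hdiff
    calc |evalT g ξ| ≤ (C * U ^ κ0 + C * (1/c) ^ e' * ξ ^ e') + 1 := by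
          rw [h7] at h6; linarith
      _ = (1 + C * U ^ κ0) + (C * (1/c) ^ e') * ξ ^ e' := by ring
  have hA : Tendsto (fun ξ : ℝ => evalT g ξ / ξ ^ m) atTop (𝓝 (g m)) := by
    have := tendsto_sum_div_aux g.support (fun κ => g κ) m (fun κ h => le_lexpT h)
      (lexpT_mem hgne)
    apply this.congr'
    filter_upwards with ξ
    rw [evalT]
  have hB : Tendsto (fun ξ : ℝ => ((1 + C * U ^ κ0) + (C * (1/c) ^ e') * ξ ^ e') / ξ ^ m)
      atTop (𝓝 0) := by
    have h1 := tendsto_term_aux 0 m (1 + C * U ^ κ0) (by linarith)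
    have h2 := tendsto_term_aux e' m (C * (1/c) ^ e') (by linarith)
    have h3 := h1.add h2
    rw [add_zero] at h3
    apply h3.congr
    intro ξ
    rw [← add_div, Real.rpow_zero, mul_one]
  have hle : ∀ᶠ ξ : ℝ in atTop,
      |evalT g ξ / ξ ^ m| ≤ ((1 + C * U ^ κ0) + (C * (1/c) ^ e') * ξ ^ e') / ξ ^ m := by
    filter_upwards [hfinal, eventually_gt_atTop (0:ℝ)] with ξ h1 h2
    rw [abs_div, _root_.abs_of_pos (Real.rpow_pos_of_pos h2 m)]
    gcongr
  have hfin : |g m| ≤ 0 := le_of_tendsto_of_tendsto hA.abs hB hle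
  exact hβ (abs_eq_zero.mp (le_antisymm hfin (abs_nonneg _)))

lemma lexpT_P_ge_one {P : TwistFun} (hP : IsShiftPoly P) : 1 ≤ lexpT P := by
  obtain ⟨hne, hnat, _⟩ := hP
  obtain ⟨n, hn1, hn⟩ := hnat _ (lexpT_mem hne)
  rw [hn]; exact_mod_cast hn1

lemma shift_lexp {g P : TwistFun} (hg : ∀ κ ∈ g.support, κ < 1) (hP : IsShiftPoly P) :
    lexpT (g + P) = lexpT P ∧ (g + P) (lexpT (g + P)) = P (lexpT P) := by
  have h1 := lexpT_P_ge_one hP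
  have hgP : g (lexpT P) = 0 := by
    by_contra h
    have := hg _ (Finsupp.mem_support_iff.mpr h)
    linarith
  have hPv : P (lexpT P) ≠ 0 := Finsupp.mem_support_iff.mp (lexpT_mem hP.1)
  have hmem : lexpT P ∈ (g + P).support := by
    rw [Finsupp.mem_support_iff, Finsupp.add_apply, hgP, zero_add]; exact hPv
  have hne : (g + P) ≠ 0 := Finsupp.support_nonempty_iff.mp ⟨_, hmem⟩
  have hle : ∀ κ ∈ (g+P).support, κ ≤ lexpT P := by
    intro κ hκ
    rcases Finset.mem_union.mp (Finsupp.support_add hκ) with h | h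
    · linarith [hg _ h]
    · exact le_lexpT h
  have heq : lexpT (g + P) = lexpT P := le_antisymm (hle _ (lexpT_mem hne)) (le_lexpT hmem)
  refine ⟨heq, ?_⟩
  rw [heq, Finsupp.add_apply, hgP, zero_add]

lemma validT_add {g P : TwistFun} (hg : ValidT g) (hP : IsShiftPoly P) : ValidT (g + P) := by
  intro κ hκ
  rcases Finset.mem_union.mp (Finsupp.support_add hκ) with h | h
  · exact hg _ h
  · obtain ⟨n, hn1, hn⟩ := hP.2.1 _ h
    rw [hn]; positivity

lemma validT_neg {f : TwistFun} (h : ValidT f) : ValidT (-f) := by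
  intro κ hκ
  exact h κ (by rwa [Finsupp.support_neg] at hκ)

lemma qop_pos (E : ExtSelberg) (hd : 0 < E.degree) : 0 < qop E := by
  have hπ := Real.pi_pos
  unfold qop ExtSelberg.conductor
  have h1 : (0:ℝ) < (2 * Real.pi) ^ E.degree := Real.rpow_pos_of_pos (by positivity) _
  have h2 : (0:ℝ) < E.Q ^ 2 := pow_pos E.hQ 2
  have h3 : (0:ℝ) < ∏ j, E.lam j ^ (2 * E.lam j) :=
    Finset.prod_pos fun j _ => Real.rpow_pos_of_pos (E.hlam j) _
  have h4 : (0:ℝ) < (2 * Real.pi * E.degree) ^ (-E.degree) :=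
    Real.rpow_pos_of_pos (by positivity) _
  exact mul_pos (mul_pos (mul_pos h1 h2) h3) h4

/-- **Fact 1.** If `d > 2` then in any chain `G(f₀) = T^♭Sₖ⋯T^♭S₁(f₀)` with base
`0 ≤ lexp(f₀) ≤ 1/d` one has `ℓⱼ = deg Sⱼ` for `j = 1,…,k`; in particular the
well-definedness condition `ℓⱼ > 1/d` is automatically satisfied. -/
theorem fact1 (E : ExtSelberg) (hd : 2 < E.degree) (k : ℕ)
    (f0 : TwistFun) (h0 : ValidT f0) (h1 : lexpT f0 ≤ 1 / E.degree)
    (P : ℕ → TwistFun) (hP : ∀ j < k, IsShiftPoly (P j))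
    (g : ℕ → TwistFun) (hg0 : g 0 = f0)
    (hchain : ∀ j < k, IsDual E.degree (qop E) (g j + P j) (g (j + 1))) :
    ∀ j < k, lexpT (g j + P j) = lexpT (P j) ∧ 1 / E.degree < lexpT (g j + P j) := by
  have hd0 : (0:ℝ) < E.degree := by linarith
  have hq : 0 < qop E := qop_pos E hd0
  have hdlt : 1 / E.degree < 1 := by rw [div_lt_one hd0]; linarith
  have hinv : ∀ j, j ≤ k → ValidT (g j) ∧ ∀ κ ∈ (g j).support, κ < 1 := by
    intro j
    induction j with
    | zero =>
      intro _
      rw [hg0]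
      refine ⟨h0, fun κ hκ => ?_⟩
      have h2 := le_lexpT hκ
      linarith
    | succ j ih =>
      intro hjk
      have hj : j < k := Nat.lt_of_succ_le hjk
      obtain ⟨hval, hlt⟩ := ih (Nat.le_of_lt hj)
      have hPj := hP j hj
      obtain ⟨heq, hcoef⟩ := shift_lexp hlt hPj
      have hvgp : ValidT (g j + P j) := validT_add hval hPj
      have hl : 1 ≤ lexpT (g j + P j) := heq ▸ lexpT_P_ge_one hPj
      rcases hchain j hj with ⟨hposl, hdp⟩ | ⟨hnegl, hdp⟩
      · exact ⟨hdp.1, dual_small hd hq hvgp hl hposl hdp⟩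
      · have hvneg : ValidT (-(g j + P j)) := validT_neg hvgp
        have hlneg : 1 ≤ lexpT (-(g j + P j)) := by rwa [lexpT_neg]
        have hposneg : 0 < (-(g j + P j)) (lexpT (-(g j + P j))) := by
          rw [lexpT_neg, Finsupp.neg_apply]; linarith
        have hres := dual_small hd hq hvneg hlneg hposneg hdp
        refine ⟨fun κ hκ => hdp.1 κ (by rwa [Finsupp.support_neg]),
          fun κ hκ => hres κ (by rwa [Finsupp.support_neg])⟩
  intro j hj
  obtain ⟨hval, hlt⟩ := hinv j (Nat.le_of_lt hj)
  obtain ⟨heq, _⟩ := shift_lexp hlt (hP j hj)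
  refine ⟨heq, ?_⟩
  rw [heq]
  have := lexpT_P_ge_one (hP j hj)
  linarith
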